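/- Let X be a measurable space, m ≥ 1, and μ a probability measure on X × Fin m; write y for the second (label) coordinate. Fix l_p ∈ Fin m and set η := μ{(x,y) : y = l_p}; assume 0 < η < 1. Let μ₁ := μ[·|{y = l_p}] and μ₀ := μ[·|{y ≠ l_p}] be the conditional probability measures. Let T₁, T₂ : X → X be measurable maps, let h, f : X × Fin m → ℝ be measurable with values in [0,1], and define c(z) := h(z, l_p) − f(z, l_p) for z ∈ X. Let ε, τ, Q ≥ 0 and λ ≥ 1 be reals. Assume: (i) ∫ f(T₂ x, y) dμ₁(x,y) ≥ 1 − ε; (ii) for every measurable A ⊆ X, μ₀{(x,y) : T₁ x ∈ A} ≤ λ · μ₁{(x,y) : T₁ x ∈ A}; (iii) ∫ |c(T₁ x) − c(T₂ x)| dμ(x,y) ≤ τ; (iv) ∫ h(T₂ x, l_p) dμ₁(x,y) ≤ Q. Then ∫ h(T₂ x, l_p) dμ(x,y) ≤ λ·(Q + τ/η + ε) + τ + (λ − 1)·η. -/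

import Mathlib

open MeasureTheory ProbabilityTheory

private lemma pgc_integrable_of_bdd {α : Type*} [MeasurableSpace α] {ν : Measure α}
    [IsFiniteMeasure ν] {g : α → ℝ} (hg : Measurable g) {C : ℝ} (hC : ∀ x, |g x| ≤ C) :
    Integrable g ν :=
  (integrable_const C).mono' hg.aestronglyMeasurable (Filter.Eventually.of_forall hC)

private lemma pgc_integral_cond_eq {α : Type*} [MeasurableSpace α] (ν : Measure α)
    (s : Set α) (g : α → ℝ) :
    ∫ x, g x ∂(ν[|s]) = (ν s).toReal⁻¹ * ∫ x in s, g x ∂ν := by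
  rw [ProbabilityTheory.cond, integral_smul_measure, ENNReal.toReal_inv, smul_eq_mul]

/-- Deterministic core of the poison generalization error bound (Results f1–f4): given a
probability measure `μ` on `X × Fin m` with target-label probability `η ∈ (0,1)`,
conditional measures `μ₁ = μ[·|y = l_p]` and `μ₀ = μ[·|y ≠ l_p]`, trigger maps `T₁, T₂`,
and `[0,1]`-valued hypotheses `h, f`, the conditions (i)–(iv) imply
`∫ h(T₂ x, l_p) dμ ≤ λ(Q + τ/η + ε) + τ + (λ−1)η`. -/
theorem poison_generalization_core
    {X : Type*} [MeasurableSpace X] {m : ℕ} (hm : 1 ≤ m)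
    (μ : Measure (X × Fin m)) [IsProbabilityMeasure μ] (l_p : Fin m)
    (η : ℝ) (hη : η = (μ {p | p.2 = l_p}).toReal) (hη0 : 0 < η) (hη1 : η < 1)
    (T₁ T₂ : X → X) (hT₁ : Measurable T₁) (hT₂ : Measurable T₂)
    (h f : X × Fin m → ℝ) (hhm : Measurable h) (hfm : Measurable f)
    (hh01 : ∀ p, h p ∈ Set.Icc (0 : ℝ) 1) (hf01 : ∀ p, f p ∈ Set.Icc (0 : ℝ) 1)
    (ε τ Q lam : ℝ) (hε : 0 ≤ ε) (hτ : 0 ≤ τ) (hQ : 0 ≤ Q) (hlam : 1 ≤ lam)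
    -- (i) the trigger is adversarial for `f` on the target class
    (hyp1 : 1 - ε ≤ ∫ p, f (T₂ p.1, p.2) ∂(μ[|{p | p.2 = l_p}]))
    -- (ii) λ-domination of the trigger distribution
    (hyp2 : ∀ A : Set X, MeasurableSet A →
      ((μ[|{p | p.2 ≠ l_p}]) {p | T₁ p.1 ∈ A}).toReal ≤
        lam * ((μ[|{p | p.2 = l_p}]) {p | T₁ p.1 ∈ A}).toReal)
    -- (iii) shortcut-similarity condition for `c(z) = h(z, l_p) − f(z, l_p)`
    (hyp3 : ∫ p, |(h (T₁ p.1, l_p) - f (T₁ p.1, l_p)) -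
        (h (T₂ p.1, l_p) - f (T₂ p.1, l_p))| ∂μ ≤ τ)
    -- (iv) empirical bound on the target-class loss of `h` on triggered inputs
    (hyp4 : ∫ p, h (T₂ p.1, l_p) ∂(μ[|{p | p.2 = l_p}]) ≤ Q) :
    ∫ p, h (T₂ p.1, l_p) ∂μ ≤ lam * (Q + τ / η + ε) + τ + (lam - 1) * η := by
  have hlam0 : (0 : ℝ) ≤ lam := le_trans zero_le_one hlam
  set E : Set (X × Fin m) := {p | p.2 = l_p} with hEdef
  have hE : MeasurableSet E := measurable_snd (measurableSet_singleton l_p)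
  have hcompl : {p : X × Fin m | p.2 ≠ l_p} = Eᶜ := rfl
  rw [hcompl] at hyp2
  -- basic facts about η
  have hμE : (μ E).toReal = η := hη.symm
  have hμE0 : μ E ≠ 0 := by
    intro h0; rw [hη, h0] at hη0; simp at hη0
  have hμEc : (μ Eᶜ).toReal = 1 - η := by
    rw [measure_compl hE (measure_ne_top μ E), measure_univ,
      ENNReal.toReal_sub_of_le prob_le_one ENNReal.one_ne_top, ENNReal.toReal_one, hμE]
  have hμEc0 : μ Eᶜ ≠ 0 := by
    intro h0; rw [h0] at hμEc; simp at hμEc; linarith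
  haveI i1 : IsProbabilityMeasure (μ[|E]) := cond_isProbabilityMeasure hμE0
  haveI i0 : IsProbabilityMeasure (μ[|Eᶜ]) := cond_isProbabilityMeasure hμEc0
  -- the functions involved
  set H : X × Fin m → ℝ := fun p => h (T₂ p.1, l_p) with hHdef
  set C₁ : X × Fin m → ℝ := fun p => h (T₁ p.1, l_p) - f (T₁ p.1, l_p) with hC1def
  set C₂ : X × Fin m → ℝ := fun p => h (T₂ p.1, l_p) - f (T₂ p.1, l_p) with hC2def
  set D : X × Fin m → ℝ := fun p => |C₁ p - C₂ p| with hDdef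
  set G : X → ℝ := fun z => h (z, l_p) - f (z, l_p) + 1 with hGdef
  set F : X × Fin m → ℝ := fun p => G (T₁ p.1) with hFdef
  set F₂ : X × Fin m → ℝ := fun p => f (T₂ p.1, l_p) with hF2def
  -- measurability
  have mT₁ : Measurable fun p : X × Fin m => (T₁ p.1, l_p) :=
    (hT₁.comp measurable_fst).prodMk measurable_const
  have mT₂ : Measurable fun p : X × Fin m => (T₂ p.1, l_p) :=
    (hT₂.comp measurable_fst).prodMk measurable_const
  have mH : Measurable H := hhm.comp mT₂
  have mC₁ : Measurable C₁ := (hhm.comp mT₁).sub (hfm.comp mT₁)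
  have mC₂ : Measurable C₂ := (hhm.comp mT₂).sub (hfm.comp mT₂)
  have mD : Measurable D := (mC₁.sub mC₂).abs
  have mG : Measurable G :=
    (((hhm.comp (measurable_id.prodMk measurable_const)).sub
      (hfm.comp (measurable_id.prodMk measurable_const)))).add measurable_const
  have mF : Measurable F := mG.comp (hT₁.comp measurable_fst)
  have mF₂ : Measurable F₂ := hfm.comp mT₂
  -- bounds
  have bH : ∀ p, |H p| ≤ 1 := fun p => abs_le.2 ⟨by linarith [(hh01 (T₂ p.1, l_p)).1],
    (hh01 (T₂ p.1, l_p)).2⟩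
  have bC₁ : ∀ p, |C₁ p| ≤ 1 := fun p => abs_le.2
    ⟨by simp only [hC1def]; linarith [(hh01 (T₁ p.1, l_p)).1, (hf01 (T₁ p.1, l_p)).2],
     by simp only [hC1def]; linarith [(hh01 (T₁ p.1, l_p)).2, (hf01 (T₁ p.1, l_p)).1]⟩
  have bC₂ : ∀ p, |C₂ p| ≤ 1 := fun p => abs_le.2
    ⟨by simp only [hC2def]; linarith [(hh01 (T₂ p.1, l_p)).1, (hf01 (T₂ p.1, l_p)).2],
     by simp only [hC2def]; linarith [(hh01 (T₂ p.1, l_p)).2, (hf01 (T₂ p.1, l_p)).1]⟩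
  have bD : ∀ p, |D p| ≤ 2 := fun p => by
    rw [hDdef]; rw [abs_abs]
    calc |C₁ p - C₂ p| ≤ |C₁ p| + |C₂ p| := abs_sub _ _
      _ ≤ 2 := by linarith [bC₁ p, bC₂ p]
  have bG0 : ∀ z, 0 ≤ G z := fun z => by
    simp only [hGdef]; linarith [(hh01 (z, l_p)).1, (hf01 (z, l_p)).2]
  have bG2 : ∀ z, G z ≤ 2 := fun z => by
    simp only [hGdef]; linarith [(hh01 (z, l_p)).2, (hf01 (z, l_p)).1]
  have bF : ∀ p, |F p| ≤ 2 := fun p => by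
    rw [abs_le]; exact ⟨by linarith [bG0 (T₁ p.1)], bG2 (T₁ p.1)⟩
  have bF₂ : ∀ p, |F₂ p| ≤ 1 := fun p => abs_le.2 ⟨by linarith [(hf01 (T₂ p.1, l_p)).1],
    (hf01 (T₂ p.1, l_p)).2⟩
  -- integrability (on any finite measure)
  have intH : ∀ (ν : Measure (X × Fin m)) [IsFiniteMeasure ν], Integrable H ν :=
    fun ν _ => pgc_integrable_of_bdd mH bH
  have intC₁ : ∀ (ν : Measure (X × Fin m)) [IsFiniteMeasure ν], Integrable C₁ ν :=
    fun ν _ => pgc_integrable_of_bdd mC₁ bC₁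
  have intC₂ : ∀ (ν : Measure (X × Fin m)) [IsFiniteMeasure ν], Integrable C₂ ν :=
    fun ν _ => pgc_integrable_of_bdd mC₂ bC₂
  have intD : ∀ (ν : Measure (X × Fin m)) [IsFiniteMeasure ν], Integrable D ν :=
    fun ν _ => pgc_integrable_of_bdd mD bD
  have intF : ∀ (ν : Measure (X × Fin m)) [IsFiniteMeasure ν], Integrable F ν :=
    fun ν _ => pgc_integrable_of_bdd mF bF
  have intF₂ : ∀ (ν : Measure (X × Fin m)) [IsFiniteMeasure ν], Integrable F₂ ν :=
    fun ν _ => pgc_integrable_of_bdd mF₂ bF₂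
  -- names for the integrals
  set a1 : ℝ := ∫ p, H p ∂(μ[|E]) with ha1
  set a0 : ℝ := ∫ p, H p ∂(μ[|Eᶜ]) with ha0
  set b1 : ℝ := ∫ p, C₂ p ∂(μ[|E]) with hb1
  set b0 : ℝ := ∫ p, C₂ p ∂(μ[|Eᶜ]) with hb0
  set c1 : ℝ := ∫ p, C₁ p ∂(μ[|E]) with hc1
  set c0 : ℝ := ∫ p, C₁ p ∂(μ[|Eᶜ]) with hc0
  set d1 : ℝ := ∫ p, D p ∂(μ[|E]) with hd1
  set d0 : ℝ := ∫ p, D p ∂(μ[|Eᶜ]) with hd0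
  -- decomposition of the total integral
  have hsplit : ∫ p, H p ∂μ = η * a1 + (1 - η) * a0 := by
    rw [ha1, ha0, pgc_integral_cond_eq, pgc_integral_cond_eq, hμE, hμEc,
      ← integral_add_compl hE (intH μ)]
    rw [← mul_assoc, ← mul_assoc, mul_inv_cancel₀ (ne_of_gt hη0),
      mul_inv_cancel₀ (by linarith : (1:ℝ) - η ≠ 0), one_mul, one_mul]
  -- D-integral bounds from hyp3
  have hDtot : ∫ p, D p ∂μ ≤ τ := hyp3
  have hDnn : ∀ p, 0 ≤ D p := fun p => abs_nonneg _
  have hd1τ : d1 ≤ τ / η := by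
    rw [hd1, pgc_integral_cond_eq, hμE]
    have h1 : ∫ p in E, D p ∂μ ≤ τ :=
      le_trans (setIntegral_le_integral (intD μ) (Filter.Eventually.of_forall hDnn)) hDtot
    rw [div_eq_inv_mul]
    exact mul_le_mul_of_nonneg_left h1 (inv_nonneg.2 hη0.le)
  have hd0τ : d0 ≤ τ / (1 - η) := by
    rw [hd0, pgc_integral_cond_eq, hμEc]
    have h1 : ∫ p in Eᶜ, D p ∂μ ≤ τ :=
      le_trans (setIntegral_le_integral (intD μ) (Filter.Eventually.of_forall hDnn)) hDtot
    rw [div_eq_inv_mul]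
    exact mul_le_mul_of_nonneg_left h1 (inv_nonneg.2 (by linarith))
  -- hyp1, rewritten at label l_p
  have hae : ∀ᵐ p ∂(μ[|E]), p.2 = l_p := by
    rw [Filter.eventually_iff, mem_ae_iff]
    have : {p : X × Fin m | p.2 = l_p}ᶜ = Eᶜ := rfl
    rw [this, cond_apply hE, Set.inter_compl_self, measure_empty, mul_zero]
  have hF₂int : 1 - ε ≤ ∫ p, F₂ p ∂(μ[|E]) := by
    refine le_trans hyp1 (le_of_eq (integral_congr_ae ?_))
    exact hae.mono fun p hp => by rw [hF2def]; simp [hp]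
  -- key domination via layer cake
  have key : ∫ p, F p ∂(μ[|Eᶜ]) ≤ lam * ∫ p, F p ∂(μ[|E]) := by
    have hFnn : ∀ p : X × Fin m, 0 ≤ F p := fun p => bG0 (T₁ p.1)
    have e0 : ∫ p, F p ∂(μ[|Eᶜ]) = (∫⁻ p, ENNReal.ofReal (F p) ∂(μ[|Eᶜ])).toReal :=
      integral_eq_lintegral_of_nonneg_ae (Filter.Eventually.of_forall hFnn)
        mF.aestronglyMeasurable
    have e1 : ∫ p, F p ∂(μ[|E]) = (∫⁻ p, ENNReal.ofReal (F p) ∂(μ[|E])).toReal :=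
      integral_eq_lintegral_of_nonneg_ae (Filter.Eventually.of_forall hFnn)
        mF.aestronglyMeasurable
    have lc0 : ∫⁻ p, ENNReal.ofReal (F p) ∂(μ[|Eᶜ]) =
        ∫⁻ t in Set.Ioi (0:ℝ), (μ[|Eᶜ]) {a | t < F a} :=
      lintegral_eq_lintegral_meas_lt _ (Filter.Eventually.of_forall hFnn) mF.aemeasurable
    have lc1 : ∫⁻ p, ENNReal.ofReal (F p) ∂(μ[|E]) =
        ∫⁻ t in Set.Ioi (0:ℝ), (μ[|E]) {a | t < F a} :=
      lintegral_eq_lintegral_meas_lt _ (Filter.Eventually.of_forall hFnn) mF.aemeasurable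
    have hpt : ∀ t : ℝ, (μ[|Eᶜ]) {a | t < F a} ≤
        ENNReal.ofReal lam * (μ[|E]) {a | t < F a} := by
      intro t
      have hA : MeasurableSet {z : X | t < G z} := measurableSet_lt measurable_const mG
      have h2 := hyp2 {z : X | t < G z} hA
      have hset : {a : X × Fin m | t < F a} = {p : X × Fin m | T₁ p.1 ∈ {z : X | t < G z}} :=
        rfl
      rw [hset]
      calc (μ[|Eᶜ]) {p : X × Fin m | T₁ p.1 ∈ {z : X | t < G z}}
          = ENNReal.ofReal (((μ[|Eᶜ]) {p | T₁ p.1 ∈ {z : X | t < G z}}).toReal) :=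
            (ENNReal.ofReal_toReal (measure_ne_top _ _)).symm
        _ ≤ ENNReal.ofReal (lam * ((μ[|E]) {p | T₁ p.1 ∈ {z : X | t < G z}}).toReal) :=
            ENNReal.ofReal_le_ofReal h2
        _ = ENNReal.ofReal lam * (μ[|E]) {p | T₁ p.1 ∈ {z : X | t < G z}} := by
            rw [ENNReal.ofReal_mul hlam0, ENNReal.ofReal_toReal (measure_ne_top _ _)]
    have L1fin : ∫⁻ p, ENNReal.ofReal (F p) ∂(μ[|E]) ≠ ⊤ := by
      have : ∫⁻ p, ENNReal.ofReal (F p) ∂(μ[|E]) ≤ ∫⁻ _, ENNReal.ofReal 2 ∂(μ[|E]) :=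
        lintegral_mono fun p => ENNReal.ofReal_le_ofReal (le_trans (le_abs_self _) (bF p))
      rw [lintegral_const, measure_univ, mul_one] at this
      exact ne_top_of_le_ne_top ENNReal.ofReal_ne_top this
    have hle : ∫⁻ p, ENNReal.ofReal (F p) ∂(μ[|Eᶜ]) ≤
        ENNReal.ofReal lam * ∫⁻ p, ENNReal.ofReal (F p) ∂(μ[|E]) := by
      rw [lc0, lc1, ← lintegral_const_mul' _ _ ENNReal.ofReal_ne_top]
      exact lintegral_mono fun t => hpt t
    rw [e0, e1]
    calc (∫⁻ p, ENNReal.ofReal (F p) ∂(μ[|Eᶜ])).toReal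
        ≤ (ENNReal.ofReal lam * ∫⁻ p, ENNReal.ofReal (F p) ∂(μ[|E])).toReal :=
          ENNReal.toReal_mono (ENNReal.mul_ne_top ENNReal.ofReal_ne_top L1fin) hle
      _ = lam * (∫⁻ p, ENNReal.ofReal (F p) ∂(μ[|E])).toReal := by
          rw [ENNReal.toReal_mul, ENNReal.toReal_ofReal hlam0]
  -- relate F-integrals to C₁-integrals (F = C₁ + 1)
  have hFC : ∀ (ν : Measure (X × Fin m)) [IsProbabilityMeasure ν],
      ∫ p, F p ∂ν = (∫ p, C₁ p ∂ν) + 1 := by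
    intro ν _
    have : F = fun p => C₁ p + 1 := rfl
    rw [this, integral_add (intC₁ ν) (integrable_const 1), integral_const]
    simp
  have keyC : c0 ≤ lam * (c1 + 1) - 1 := by
    have := key
    rw [hFC (μ[|Eᶜ]), hFC (μ[|E])] at this
    rw [hc0, hc1]; linarith
  -- pointwise comparisons integrated
  have hb0c0 : b0 ≤ c0 + d0 := by
    rw [hb0, hc0, hd0, ← integral_add (intC₁ _) (intD _)]
    refine integral_mono (intC₂ _) ((intC₁ _).add (intD _)) fun p => ?_
    have : C₂ p - C₁ p ≤ |C₁ p - C₂ p| := by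
      rw [abs_sub_comm]; exact le_abs_self _
    simp only [Pi.add_apply, hDdef]; linarith
  have hc1b1 : c1 ≤ b1 + d1 := by
    rw [hc1, hb1, hd1, ← integral_add (intC₂ _) (intD _)]
    refine integral_mono (intC₁ _) ((intC₂ _).add (intD _)) fun p => ?_
    have : C₁ p - C₂ p ≤ |C₁ p - C₂ p| := le_abs_self _
    simp only [Pi.add_apply, hDdef]; linarith
  have ha0b0 : a0 ≤ b0 + 1 := by
    rw [ha0, hb0]
    have : ∫ p, (C₂ p + 1) ∂(μ[|Eᶜ]) = (∫ p, C₂ p ∂(μ[|Eᶜ])) + 1 := by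
      rw [integral_add (intC₂ _) (integrable_const 1), integral_const]; simp
    rw [← this]
    refine integral_mono (intH _) ((intC₂ _).add (integrable_const 1)) fun p => ?_
    simp only [Pi.add_apply, hHdef, hC2def]
    linarith [(hf01 (T₂ p.1, l_p)).2]
  have hb1Q : b1 ≤ Q - (1 - ε) := by
    rw [hb1]
    have : ∫ p, C₂ p ∂(μ[|E]) = a1 - ∫ p, F₂ p ∂(μ[|E]) := by
      rw [ha1, ← integral_sub (intH _) (intF₂ _)]
    rw [this]
    have ha1Q : a1 ≤ Q := hyp4
    linarith [hF₂int]
  have ha1Q : a1 ≤ Q := hyp4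
  -- final arithmetic
  rw [show (∫ p, h (T₂ p.1, l_p) ∂μ) = ∫ p, H p ∂μ from rfl, hsplit]
  have hc0bound : c0 ≤ lam * (Q - (1 - ε) + τ / η + 1) - 1 := by
    have h1 : c1 + 1 ≤ Q - (1 - ε) + τ / η + 1 := by linarith
    have h2 := mul_le_mul_of_nonneg_left h1 hlam0
    linarith
  have ha0bound : a0 ≤ lam * (Q + τ / η + ε) + τ / (1 - η) := by
    have heq : lam * (Q - (1 - ε) + τ / η + 1) = lam * (Q + τ / η + ε) := by ring_nf
    linarith [hc0bound, hb0c0, ha0b0, hd0τ]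
  have hτη : 0 ≤ τ / η := div_nonneg hτ hη0.le
  have hS : 0 ≤ Q + τ / η + ε := by linarith
  have h1η : (1 - η) * (τ / (1 - η)) = τ := by
    rw [mul_comm, div_mul_cancel₀ _ (show (1:ℝ) - η ≠ 0 by linarith)]
  have hSlam : Q + τ / η + ε ≤ lam * (Q + τ / η + ε) := le_mul_of_one_le_left hS hlam
  have step1 : η * a1 ≤ η * (lam * (Q + τ / η + ε)) :=
    mul_le_mul_of_nonneg_left (by linarith : a1 ≤ lam * (Q + τ / η + ε)) hη0.le
  have step2 : (1 - η) * a0 ≤ (1 - η) * (lam * (Q + τ / η + ε)) + τ := by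
    have h3 := mul_le_mul_of_nonneg_left ha0bound (by linarith : (0:ℝ) ≤ 1 - η)
    rw [mul_add, h1η] at h3
    linarith
  have hsum : η * (lam * (Q + τ / η + ε)) + (1 - η) * (lam * (Q + τ / η + ε)) =
      lam * (Q + τ / η + ε) := by ring
  have hlη : 0 ≤ (lam - 1) * η := mul_nonneg (by linarith) hη0.le
  linarith
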